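/- arXiv:1506.06683 — 2 statements merged into one kernel-verified Lean document; each statement's English description precedes it below -/
import Mathlib

section
/- Two words w < w' in a shift space L are consecutive (i.e., no word of L lies strictly between them) if and only if there exists n > 0 and two finite words u, u' of length n, consecutive in the lexicographically ordered set of length-n factors of L, such that w is the greatest word of Cyl_L(u) and w' is the smallest word of Cyl_L(u'). -/
open MeasureTheory Topology Filter Set

/-- The shift map on one-sided infinite words, erasing the first letter. -/
def shiftMap {A : Type*} (w : ℕ → A) : ℕ → A := fun n => w (n + 1)

/-- A shift space: a closed, shift-invariant subset of `A^ℕ`. -/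
def IsShiftSpace {A : Type*} [TopologicalSpace A] (L : Set (ℕ → A)) : Prop :=
  IsClosed L ∧ ∀ w ∈ L, shiftMap w ∈ L

/-- The finite word `v` occurs in `w` at position `j`. -/
def OccursAt {A : Type*} (w : ℕ → A) (j : ℕ) (v : List A) : Prop :=
  ∀ i : Fin v.length, w (j + i) = v.get i

/-- `v` is a factor (subblock) of the language of `L`. -/
def IsFactor {A : Type*} (L : Set (ℕ → A)) (v : List A) : Prop :=
  ∃ w ∈ L, ∃ j, OccursAt w j v

/-- The cylinder of `v` in `L`: words of `L` having `v` as a prefix. -/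
def Cyl {A : Type*} (L : Set (ℕ → A)) (v : List A) : Set (ℕ → A) :=
  {w ∈ L | OccursAt w 0 v}

/-- Strict lexicographic order on infinite words. -/
def LexLt {A : Type*} [LinearOrder A] (w w' : ℕ → A) : Prop :=
  ∃ n, (∀ i < n, w i = w' i) ∧ w n < w' n

/-- Lexicographic order (non-strict) on infinite words. -/
def LexLe {A : Type*} [LinearOrder A] (w w' : ℕ → A) : Prop := LexLt w w' ∨ w = w'

/-- The word interval `[w, w']` in `L` for the lexicographic order. -/
def wordInterval {A : Type*} [LinearOrder A] (L : Set (ℕ → A)) (w w' : ℕ → A) :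
    Set (ℕ → A) := {z ∈ L | LexLe w z ∧ LexLe z w'}

/-- The length-`n` prefix of an infinite word, as a list. -/
def prefixWord {A : Type*} (w : ℕ → A) (n : ℕ) : List A := List.ofFn (fun i : Fin n => w i)

/-- A factor is left special if it has at least two distinct left one-letter extensions. -/
def IsLeftSpecial {A : Type*} (L : Set (ℕ → A)) (v : List A) : Prop :=
  ∃ a b : A, a ≠ b ∧ IsFactor L (a :: v) ∧ IsFactor L (b :: v)

/-- A factor is right special if it has at least two distinct right one-letter extensions. -/
def IsRightSpecial {A : Type*} (L : Set (ℕ → A)) (v : List A) : Prop :=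
  ∃ a b : A, a ≠ b ∧ IsFactor L (v ++ [a]) ∧ IsFactor L (v ++ [b])

/-- The set of infinite left special words: all prefixes are left special factors. -/
def SPset {A : Type*} (L : Set (ℕ → A)) : Set (ℕ → A) :=
  {w | ∀ n : ℕ, IsLeftSpecial L (prefixWord w n)}

/-- The factor complexity `p_L(n)`: the number of distinct length-`n` factors of `L`. -/
noncomputable def complexity {A : Type*} (L : Set (ℕ → A)) (n : ℕ) : ℕ :=
  Nat.card {v : List A // v.length = n ∧ IsFactor L v}

/-- The number of left special factors of length `n`. -/
noncomputable def splCount {A : Type*} (L : Set (ℕ → A)) (n : ℕ) : ℕ :=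
  Nat.card {v : List A // v.length = n ∧ IsFactor L v ∧ IsLeftSpecial L v}

/-- A minimal shift: a nonempty shift space with no nonempty proper subshift. -/
def IsMinimalShift {A : Type*} [TopologicalSpace A] (L : Set (ℕ → A)) : Prop :=
  IsShiftSpace L ∧ L.Nonempty ∧
    ∀ L' ⊆ L, IsShiftSpace L' → L'.Nonempty → L' = L

/-- Aperiodicity: no periodic word in `L`. -/
def IsAperiodic {A : Type*} (L : Set (ℕ → A)) : Prop :=
  ∀ w ∈ L, ∀ k : ℕ, 0 < k → shiftMap^[k] w ≠ w

/-- The factor set of `L` is prolongable: every factor extends by a letter on both sides. -/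
def Prolongable {A : Type*} (L : Set (ℕ → A)) : Prop :=
  ∀ v : List A, IsFactor L v →
    (∃ a : A, IsFactor L (a :: v)) ∧ (∃ b : A, IsFactor L (v ++ [b]))


section Aux
variable {A : Type*}

lemma lex_iff_exists [LinearOrder A] :
    ∀ (u v : List A), u.length = v.length →
    (List.Lex (· < ·) u v ↔
      ∃ i, ∃ hu : i < u.length, ∃ hv : i < v.length,
        (∀ j (hju : j < u.length) (hjv : j < v.length), j < i → u[j] = v[j]) ∧
        u[i] < v[i])
  | [], [], _ => by
      constructor
      · intro h; cases h
      · rintro ⟨i, hi, _⟩; simp at hi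
  | a :: u, b :: v, h => by
      constructor
      · intro hl
        cases hl with
        | rel hab => exact ⟨0, by simp, by simp, by intro j _ _ hj; omega, by simpa using hab⟩
        | cons ht =>
            obtain ⟨i, hu, hv, hagree, hlt⟩ := (lex_iff_exists u v (by simpa using h)).1 ht
            refine ⟨i+1, by simpa using hu, by simpa using hv, ?_, by simpa using hlt⟩
            intro j hju hjv hj
            cases j with
            | zero => simp
            | succ j => simpa using hagree j (by simpa using hju) (by simpa using hjv) (by omega)
      · rintro ⟨i, hu, hv, hagree, hlt⟩
        cases i with
        | zero => exact List.Lex.rel (by simpa using hlt)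
        | succ i =>
            have hab : a = b := by exact hagree 0 (by simp) (by simp) (by omega)
            subst hab
            exact List.Lex.cons ((lex_iff_exists u v (by simpa using h)).2
              ⟨i, by simpa using hu, by simpa using hv,
               fun j hju hjv hj => by
                 exact hagree (j+1) (by simpa using hju) (by simpa using hjv) (by omega),
               by simpa using hlt⟩)
  | [], b :: v, h => by simp at h
  | a :: u, [], h => by simp at h

lemma LexLt.asymm [LinearOrder A] {w z : ℕ → A} (h1 : LexLt w z) (h2 : LexLt z w) : False := by
  obtain ⟨m, ha, hl⟩ := h1
  obtain ⟨m', ha', hl'⟩ := h2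
  rcases lt_trichotomy m m' with h | h | h
  · exact absurd (ha' m h).symm (ne_of_lt hl)
  · subst h; exact lt_asymm hl hl'
  · exact absurd (ha m' h).symm (ne_of_lt hl')

lemma LexLt.irrefl [LinearOrder A] {w : ℕ → A} (h : LexLt w w) : False := by
  obtain ⟨m, _, hl⟩ := h; exact lt_irrefl _ hl

lemma lexLt_trichotomy [LinearOrder A] {w z : ℕ → A} (h : w ≠ z) :
    LexLt w z ∨ LexLt z w := by
  have hne : ∃ n, w n ≠ z n := by
    by_contra hc
    push_neg at hc
    exact h (funext hc)
  classical
  set m := Nat.find hne with hm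
  have hagree : ∀ i < m, w i = z i := fun i hi => not_not.mp (Nat.find_min hne hi)
  rcases lt_or_gt_of_ne (Nat.find_spec hne) with hlt | hlt
  · exact Or.inl ⟨m, hagree, hlt⟩
  · exact Or.inr ⟨m, fun i hi => (hagree i hi).symm, hlt⟩

lemma shiftMap_iter_apply {w : ℕ → A} (j n : ℕ) : (shiftMap^[j] w) n = w (n + j) := by
  induction j generalizing w n with
  | zero => rfl
  | succ j ih =>
      rw [Function.iterate_succ_apply, ih]
      simp only [shiftMap]
      ring_nf

lemma shiftMap_iter_mem [TopologicalSpace A] {L : Set (ℕ → A)} (hL : IsShiftSpace L)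
    {w : ℕ → A} (hw : w ∈ L) (j : ℕ) : shiftMap^[j] w ∈ L := by
  induction j with
  | zero => exact hw
  | succ j ih => rw [Function.iterate_succ_apply']; exact hL.2 _ ih

lemma isFactor_exists_word [TopologicalSpace A] {L : Set (ℕ → A)} (hL : IsShiftSpace L)
    {v : List A} (hv : IsFactor L v) :
    ∃ y ∈ L, ∀ i (hi : i < v.length), y i = v[i] := by
  obtain ⟨w, hw, j, hocc⟩ := hv
  refine ⟨shiftMap^[j] w, shiftMap_iter_mem hL hw j, fun i hi => ?_⟩
  rw [shiftMap_iter_apply]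
  have := hocc ⟨i, hi⟩
  simpa [Nat.add_comm] using this

lemma prefixWord_length (w : ℕ → A) (n : ℕ) : (prefixWord w n).length = n := by
  simp [prefixWord]

lemma prefixWord_getElem (w : ℕ → A) (n i : ℕ) (hi : i < (prefixWord w n).length) :
    (prefixWord w n)[i] = w i := by
  simp [prefixWord]

end Aux


lemma occursAt_prefixWord {A : Type*} (w : ℕ → A) (n : ℕ) : OccursAt w 0 (prefixWord w n) := by
  intro i
  rw [List.get_eq_getElem, prefixWord_getElem, Nat.zero_add]

lemma occursAt_zero_getElem {A : Type*} {w : ℕ → A} {v : List A} (h : OccursAt w 0 v) :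
    ∀ i, (hi : i < v.length) → v[i] = w i := by
  intro i hi
  have := h ⟨i, hi⟩
  simp only [List.get_eq_getElem, Nat.zero_add] at this
  exact this.symm

/-- Two words `w < w'` of a shift space `L` are consecutive iff for some
`n > 0` they are respectively the greatest and smallest words of two consecutive
cylinders of length-`n` factors. -/
theorem consecutive_words_iff_consecutive_cylinders
    {A : Type*} [Fintype A] [TopologicalSpace A] [DiscreteTopology A] [LinearOrder A]
    (L : Set (ℕ → A)) (hL : IsShiftSpace L)
    (w w' : ℕ → A) (hw : w ∈ L) (hw' : w' ∈ L) (hlt : LexLt w w') :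
    (¬ ∃ z ∈ L, LexLt w z ∧ LexLt z w') ↔
      ∃ n > 0, ∃ u u' : List A,
        u.length = n ∧ u'.length = n ∧ IsFactor L u ∧ IsFactor L u' ∧
        List.Lex (· < ·) u u' ∧
        (¬ ∃ v : List A, v.length = n ∧ IsFactor L v ∧
            List.Lex (· < ·) u v ∧ List.Lex (· < ·) v u') ∧
        (w ∈ Cyl L u ∧ ∀ z ∈ Cyl L u, LexLe z w) ∧
        (w' ∈ Cyl L u' ∧ ∀ z ∈ Cyl L u', LexLe w' z) := by
  obtain ⟨n₀, hagree0, hlt0⟩ := hlt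
  constructor
  · intro hno
    set n := n₀ + 1 with hn_def
    refine ⟨n, Nat.succ_pos _, prefixWord w n, prefixWord w' n,
      prefixWord_length w n, prefixWord_length w' n,
      ⟨w, hw, 0, occursAt_prefixWord w n⟩, ⟨w', hw', 0, occursAt_prefixWord w' n⟩,
      ?_, ?_, ⟨⟨hw, occursAt_prefixWord w n⟩, ?_⟩, ⟨⟨hw', occursAt_prefixWord w' n⟩, ?_⟩⟩
    · -- Lex u u'
      refine (lex_iff_exists _ _ (by rw [prefixWord_length, prefixWord_length])).2
        ⟨n₀, by rw [prefixWord_length]; omega, by rw [prefixWord_length]; omega, ?_, ?_⟩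
      · intro j hju hjv hj
        rw [prefixWord_getElem, prefixWord_getElem]
        exact hagree0 j hj
      · rw [prefixWord_getElem, prefixWord_getElem]
        exact hlt0
    · -- no factor strictly between
      rintro ⟨v, hvlen, hvfac, huv, hvu'⟩
      obtain ⟨y, hyL, hy⟩ := isFactor_exists_word hL hvfac
      obtain ⟨i, hiu, hiv, hag1, hlt1⟩ :=
        (lex_iff_exists _ _ (by rw [prefixWord_length, hvlen])).1 huv
      obtain ⟨i', hiv', hiu', hag2, hlt2⟩ :=
        (lex_iff_exists _ _ (by rw [prefixWord_length, hvlen])).1 hvu'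
      refine hno ⟨y, hyL, ⟨i, ?_, ?_⟩, ⟨i', ?_, ?_⟩⟩
      · intro j hj
        have h1 := hag1 j (by omega) (by omega) hj
        rw [prefixWord_getElem] at h1
        rw [h1, hy j (by omega)]
      · rw [prefixWord_getElem] at hlt1
        rw [hy i hiv]
        exact hlt1
      · intro j hj
        have h2 := hag2 j (by omega) (by omega) hj
        rw [prefixWord_getElem] at h2
        rw [hy j (by omega), h2]
      · rw [prefixWord_getElem] at hlt2
        rw [hy i' hiv']
        exact hlt2
    · -- w greatest in Cyl u
      rintro z ⟨hzL, hzocc⟩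
      by_cases hzw : z = w
      · exact Or.inr hzw
      rcases lexLt_trichotomy hzw with hzw1 | hzw1
      · exact Or.inl hzw1
      · exfalso
        have hzpre : ∀ i, i < n → z i = w i := by
          intro i hi
          have := occursAt_zero_getElem hzocc i (by rw [prefixWord_length]; exact hi)
          rw [prefixWord_getElem] at this
          exact this.symm
        obtain ⟨m, hagm, hltm⟩ := hzw1
        have hmn : n ≤ m := by
          by_contra hc
          exact absurd (hzpre m (by omega)).symm (ne_of_lt hltm)
        refine hno ⟨z, hzL, ⟨m, hagm, hltm⟩, ⟨n₀, ?_, ?_⟩⟩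
        · intro i hi
          rw [hzpre i (by omega)]
          exact hagree0 i hi
        · rw [hzpre n₀ (by omega)]
          exact hlt0
    · -- w' smallest in Cyl u'
      rintro z ⟨hzL, hzocc⟩
      by_cases hzw : w' = z
      · exact Or.inr hzw
      rcases lexLt_trichotomy hzw with hzw1 | hzw1
      · exact Or.inl hzw1
      · exfalso
        have hzpre : ∀ i, i < n → z i = w' i := by
          intro i hi
          have := occursAt_zero_getElem hzocc i (by rw [prefixWord_length]; exact hi)
          rw [prefixWord_getElem] at this
          exact this.symm
        obtain ⟨m, hagm, hltm⟩ := hzw1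
        have hmn : n ≤ m := by
          by_contra hc
          exact absurd (hzpre m (by omega)) (ne_of_lt hltm)
        refine hno ⟨z, hzL, ⟨n₀, ?_, ?_⟩, ⟨m, hagm, hltm⟩⟩
        · intro i hi
          rw [hzpre i (by omega)]
          exact (hagree0 i hi)
        · rw [hzpre n₀ (by omega)]
          exact hlt0
  · rintro ⟨n, hn, u, u', hul, hu'l, hufac, hu'fac, hlex, hbetween,
      ⟨hwCyl, hwmax⟩, ⟨hw'Cyl, hw'min⟩⟩
    rintro ⟨z, hzL, hwz, hzw'⟩
    have hu_eq := occursAt_zero_getElem hwCyl.2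
    have hu'_eq := occursAt_zero_getElem hw'Cyl.2
    set v := prefixWord z n with hv_def
    have hvlen : v.length = n := prefixWord_length z n
    have hvz : ∀ i, (hi : i < v.length) → v[i] = z i := fun i hi => prefixWord_getElem z n i hi
    have claim1 : List.Lex (· < ·) u v ∨ u = v := by
      obtain ⟨m, hag, hmlt⟩ := hwz
      by_cases hm : m < n
      · left
        refine (lex_iff_exists u v (by omega)).2 ⟨m, by omega, by omega, ?_, ?_⟩
        · intro j hju hjv hj
          rw [hu_eq j hju, hvz j hjv]
          exact hag j hj
        · rw [hu_eq m (by omega), hvz m (by omega)]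
          exact hmlt
      · right
        refine List.ext_getElem (by omega) fun i hi hi' => ?_
        rw [hu_eq i hi, hvz i hi']
        exact hag i (by omega)
    have claim2 : List.Lex (· < ·) v u' ∨ v = u' := by
      obtain ⟨m, hag, hmlt⟩ := hzw'
      by_cases hm : m < n
      · left
        refine (lex_iff_exists v u' (by omega)).2 ⟨m, by omega, by omega, ?_, ?_⟩
        · intro j hjv hju hj
          rw [hu'_eq j hju, hvz j hjv]
          exact hag j hj
        · rw [hu'_eq m (by omega), hvz m (by omega)]
          exact hmlt
      · right
        refine List.ext_getElem (by omega) fun i hi hi' => ?_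
        rw [hu'_eq i hi', hvz i hi]
        exact hag i (by omega)
    rcases claim1 with hc1 | hc1
    · rcases claim2 with hc2 | hc2
      · exact hbetween ⟨v, hvlen, ⟨z, hzL, 0, occursAt_prefixWord z n⟩, hc1, hc2⟩
      · have hzCyl : z ∈ Cyl L u' := ⟨hzL, by rw [← hc2]; exact occursAt_prefixWord z n⟩
        rcases hw'min z hzCyl with h | h
        · exact LexLt.asymm h hzw'
        · rw [h] at hzw'
          exact LexLt.irrefl hzw'
    · have hzCyl : z ∈ Cyl L u := ⟨hzL, by rw [hc1]; exact occursAt_prefixWord z n⟩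
      rcases hwmax z hzCyl with h | h
      · exact LexLt.asymm hwz h
      · rw [h] at hwz
        exact LexLt.irrefl hwz
end

section
/- Let φ_μ(w) = μ([w_min, w]) as above. For w, w' ∈ L with w < w', one has φ_μ(w) = φ_μ(w') if and only if w and w' are consecutive in L. -/
open MeasureTheory Topology Filter Set

section Aux

variable {A : Type*} [LinearOrder A]

theorem lexLt_irrefl (w : ℕ → A) : ¬ LexLt w w := by
  rintro ⟨n, _, hn⟩; exact lt_irrefl _ hn

theorem lexLt_trans {a b c : ℕ → A} (h1 : LexLt a b) (h2 : LexLt b c) : LexLt a c := by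
  obtain ⟨n, hn, hn'⟩ := h1
  obtain ⟨m, hm, hm'⟩ := h2
  rcases lt_trichotomy n m with h | h | h
  · exact ⟨n, fun i hi => (hn i hi).trans (hm i (hi.trans h)), hn'.trans_eq (hm n h)⟩
  · subst h; exact ⟨n, fun i hi => (hn i hi).trans (hm i hi), hn'.trans hm'⟩
  · exact ⟨m, fun i hi => (hn i (hi.trans h)).trans (hm i hi), ((hn m h).trans_lt hm')⟩

theorem lexLe_of_le_of_lt {a b c : ℕ → A} (h1 : LexLe a b) (h2 : LexLt b c) : LexLe a c := by
  rcases h1 with h1 | rfl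
  · exact Or.inl (lexLt_trans h1 h2)
  · exact Or.inl h2

theorem not_lexLe_of_lexLt {a b : ℕ → A} (h : LexLt a b) : ¬ LexLe b a := by
  rintro (h' | rfl)
  · exact lexLt_irrefl a (lexLt_trans h h')
  · exact lexLt_irrefl _ h

theorem lexLt_of_not_lexLe {a b : ℕ → A} (h : ¬ LexLe a b) : LexLt b a := by
  have hne : a ≠ b := fun he => h (Or.inr he)
  have hex : ∃ n, a n ≠ b n := by
    by_contra hc
    push_neg at hc
    exact hne (funext hc)
  classical
  have hn : a (Nat.find hex) ≠ b (Nat.find hex) := Nat.find_spec hex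
  have hlow : ∀ i < Nat.find hex, a i = b i := fun i hi => by
    by_contra hc; exact absurd (Nat.find_le hc : Nat.find hex ≤ i) (not_le_of_gt hi)
  rcases hn.lt_or_gt with hlt | hlt
  · exact absurd (Or.inl ⟨Nat.find hex, hlow, hlt⟩) h
  · exact ⟨Nat.find hex, fun i hi => (hlow i hi).symm, hlt⟩

end Aux

section Meas

variable {A : Type*} [Fintype A] [TopologicalSpace A] [DiscreteTopology A] [LinearOrder A]
  [MeasurableSpace A] [BorelSpace A]

theorem measA (s : Set A) : MeasurableSet s := by
  haveI : MeasurableSingletonClass A := ⟨fun a => (isClosed_singleton).measurableSet⟩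
  exact s.toFinite.measurableSet

theorem measurableSet_agree (w : ℕ → A) (n : ℕ) :
    MeasurableSet {z : ℕ → A | ∀ i < n, w i = z i} := by
  have h : {z : ℕ → A | ∀ i < n, w i = z i}
      = ⋂ i ∈ Finset.range n, (fun z : ℕ → A => z i) ⁻¹' {w i} := by
    ext z; simp [eq_comm]
  rw [h]
  exact Finset.measurableSet_biInter _ fun i _ => (measurable_pi_apply i) (measA _)

theorem measurableSet_lexLt_left (w : ℕ → A) :
    MeasurableSet {z : ℕ → A | LexLt w z} := by
  have h : {z : ℕ → A | LexLt w z}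
      = ⋃ n, ({z : ℕ → A | ∀ i < n, w i = z i} ∩ (fun z : ℕ → A => z n) ⁻¹' Set.Ioi (w n)) := by
    ext z; simp [LexLt]
  rw [h]
  exact MeasurableSet.iUnion fun n =>
    (measurableSet_agree w n).inter ((measurable_pi_apply n) (measA _))

theorem measurableSet_lexLt_right (w : ℕ → A) :
    MeasurableSet {z : ℕ → A | LexLt z w} := by
  have h : {z : ℕ → A | LexLt z w}
      = ⋃ n, ({z : ℕ → A | ∀ i < n, w i = z i} ∩ (fun z : ℕ → A => z n) ⁻¹' Set.Iio (w n)) := by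
    ext z
    simp only [LexLt, Set.mem_setOf_eq, Set.mem_iUnion, Set.mem_inter_iff, Set.mem_preimage,
      Set.mem_Iio]
    constructor
    · rintro ⟨n, h1, h2⟩; exact ⟨n, fun i hi => (h1 i hi).symm, h2⟩
    · rintro ⟨n, h1, h2⟩; exact ⟨n, fun i hi => (h1 i hi).symm, h2⟩
  rw [h]
  exact MeasurableSet.iUnion fun n =>
    (measurableSet_agree w n).inter ((measurable_pi_apply n) (measA _))

theorem measurableSet_allEq (w : ℕ → A) :
    MeasurableSet {z : ℕ → A | ∀ i, w i = z i} := by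
  have h : {z : ℕ → A | ∀ i, w i = z i} = ⋂ i, (fun z : ℕ → A => z i) ⁻¹' {w i} := by
    ext z; simp [eq_comm]
  rw [h]
  exact MeasurableSet.iInter fun i => (measurable_pi_apply i) (measA _)

theorem measurableSet_lexLe_right (w : ℕ → A) :
    MeasurableSet {z : ℕ → A | LexLe z w} := by
  have h : {z : ℕ → A | LexLe z w}
      = {z : ℕ → A | LexLt z w} ∪ {z : ℕ → A | ∀ i, w i = z i} := by
    ext z
    simp only [LexLe, Set.mem_setOf_eq, Set.mem_union]
    constructor
    · rintro (h | rfl)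
      · exact Or.inl h
      · exact Or.inr fun i => rfl
    · rintro (h | h)
      · exact Or.inl h
      · exact Or.inr (funext fun i => (h i).symm)
  rw [h]
  exact (measurableSet_lexLt_right w).union (measurableSet_allEq w)

theorem measurableSet_lexLe_left (w : ℕ → A) :
    MeasurableSet {z : ℕ → A | LexLe w z} := by
  have h : {z : ℕ → A | LexLe w z}
      = {z : ℕ → A | LexLt w z} ∪ {z : ℕ → A | ∀ i, w i = z i} := by
    ext z
    simp only [LexLe, Set.mem_setOf_eq, Set.mem_union]
    constructor
    · rintro (h | rfl)
      · exact Or.inl h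
      · exact Or.inr fun i => rfl
    · rintro (h | h)
      · exact Or.inl h
      · exact Or.inr (funext h)
  rw [h]
  exact (measurableSet_lexLt_left w).union (measurableSet_allEq w)

theorem occursAt_prefixWord_s4 (z : ℕ → A) (N : ℕ) : OccursAt z 0 (prefixWord z N) := by
  intro i
  show z (0 + i.1) = (prefixWord z N)[i.1]'i.2
  simp [prefixWord]

theorem eq_of_mem_cyl_prefix {L : Set (ℕ → A)} {z y : ℕ → A} {N : ℕ}
    (hy : y ∈ Cyl L (prefixWord z N)) : ∀ i < N, y i = z i := by
  intro i hi
  have hlen : (prefixWord z N).length = N := by simp [prefixWord]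
  have h := hy.2 ⟨i, by rw [hlen]; exact hi⟩
  simpa [prefixWord, List.get_ofFn] using h

end Meas

/-- `φ_μ(w) = φ_μ(w')` for `w < w'` in `L` iff `w` and `w'` are consecutive. -/
theorem phi_mu_noninjective_iff_consecutive
    {A : Type*} [Fintype A] [TopologicalSpace A] [DiscreteTopology A] [LinearOrder A]
    [MeasurableSpace A] [BorelSpace A]
    (L : Set (ℕ → A)) (hL : IsShiftSpace L)
    (μ : Measure (ℕ → A)) [IsProbabilityMeasure μ] (hμL : μ L = 1)
    (hreg : μ.Regular)
    (hsing : ∀ w : ℕ → A, μ {w} = 0)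
    (hcyl : ∀ v : List A, (Cyl L v).Nonempty → 0 < μ (Cyl L v))
    (wmin : ℕ → A) (hwmin : wmin ∈ L) (hwmin' : ∀ w ∈ L, LexLe wmin w) :
    ∀ w ∈ L, ∀ w' ∈ L, LexLt w w' →
      (μ (wordInterval L wmin w) = μ (wordInterval L wmin w') ↔
        ¬ ∃ z ∈ L, LexLt w z ∧ LexLt z w') := by
  intro w hw w' hw' hlt
  set S := wordInterval L wmin w with hS
  set S' := wordInterval L wmin w' with hS'
  have hsub : S ⊆ S' := by
    rintro z ⟨hzL, hz1, hz2⟩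
    exact ⟨hzL, hz1, lexLe_of_le_of_lt hz2 hlt⟩
  have hSm : MeasurableSet S := by
    have h : S = L ∩ ({z : ℕ → A | LexLe wmin z} ∩ {z : ℕ → A | LexLe z w}) := by
      ext z; simp only [hS, wordInterval, Set.mem_inter_iff, Set.mem_setOf_eq]
    rw [h]
    exact (hL.1.measurableSet).inter
      ((measurableSet_lexLe_left wmin).inter (measurableSet_lexLe_right w))
  constructor
  · intro heq
    rintro ⟨z, hzL, hwz, hzw'⟩
    have hdiff : μ (S' \ S) = 0 := by
      rw [measure_diff hsub hSm.nullMeasurableSet (measure_ne_top μ S), ← heq, tsub_self]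
    obtain ⟨n, hn, hn'⟩ := hwz
    obtain ⟨m, hm, hm'⟩ := hzw'
    set N := max n m + 1 with hN
    have hnN : n < N := Nat.lt_succ_of_le (le_max_left _ _)
    have hmN : m < N := Nat.lt_succ_of_le (le_max_right _ _)
    have hCsub : Cyl L (prefixWord z N) ⊆ S' \ S := by
      intro y hy
      have hagree : ∀ i < N, y i = z i := eq_of_mem_cyl_prefix hy
      have hwy : LexLt w y := by
        refine ⟨n, fun i hi => (hn i hi).trans (hagree i (hi.trans hnN)).symm, ?_⟩
        rw [hagree n hnN]; exact hn'
      have hyw' : LexLt y w' := by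
        refine ⟨m, fun i hi => (hagree i (hi.trans hmN)).trans (hm i hi), ?_⟩
        rw [hagree m hmN]; exact hm'
      refine ⟨⟨hy.1, hwmin' y hy.1, Or.inl hyw'⟩, ?_⟩
      rintro ⟨-, -, hyw⟩
      exact not_lexLe_of_lexLt hwy hyw
    have hpos := hcyl (prefixWord z N) ⟨z, hzL, occursAt_prefixWord_s4 z N⟩
    have hle : μ (Cyl L (prefixWord z N)) ≤ μ (S' \ S) := measure_mono hCsub
    rw [hdiff] at hle
    exact absurd (le_antisymm hle zero_le) (ne_of_gt hpos)
  · intro hno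
    have hT : S' \ S ⊆ {w'} := by
      rintro z ⟨⟨hzL, hz1, hz2⟩, hzS⟩
      have hnle : ¬ LexLe z w := fun h => hzS ⟨hzL, hz1, h⟩
      have hwz : LexLt w z := lexLt_of_not_lexLe hnle
      rcases hz2 with hz2 | rfl
      · exact absurd ⟨z, hzL, hwz, hz2⟩ hno
      · rfl
    have hT0 : μ (S' \ S) = 0 :=
      le_antisymm ((measure_mono hT).trans (hsing w').le) zero_le
    refine le_antisymm (measure_mono hsub) ?_
    calc μ S' ≤ μ ((S' \ S) ∪ S) := measure_mono (fun z hz => by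
                by_cases h : z ∈ S
                · exact Or.inr h
                · exact Or.inl ⟨hz, h⟩)
      _ ≤ μ (S' \ S) + μ S := measure_union_le _ _
      _ = μ S := by rw [hT0, zero_add]
end
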